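/- arXiv:1312.5554 — 6 statements merged into one kernel-verified Lean document; each statement's English description precedes it below -/
import Mathlib

section
/- Let $k \geq 2$, let $\omega$ be a primitive complex $k$-th root of unity, and let $s$ be an integer. Then $\frac{1}{k} \sum_{i=1}^{k-1} \frac{\omega^{i s}}{1 - \omega^{-i}} = \lfloor s/k \rfloor - \frac{s}{k} + \frac{k-1}{2k}$. -/
section Aux

variable {k : ℕ} {ω : ℂ}

lemma aux_ne_zero (hk : 2 ≤ k) (hω : IsPrimitiveRoot ω k) : ω ≠ 0 :=
  hω.ne_zero (by omega)

lemma aux_zpow_ne_one (hk : 2 ≤ k) (hω : IsPrimitiveRoot ω k) {i : ℕ}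
    (hi : i ∈ Finset.Icc 1 (k-1)) : ω ^ (i : ℤ) ≠ 1 := by
  simp only [Finset.mem_Icc] at hi
  intro h
  rw [hω.zpow_eq_one_iff_dvd] at h
  have h' : k ∣ i := by exact_mod_cast h
  have := Nat.le_of_dvd (by omega) h'
  omega

lemma aux_denom_ne_zero (hk : 2 ≤ k) (hω : IsPrimitiveRoot ω k) {i : ℕ}
    (hi : i ∈ Finset.Icc 1 (k-1)) : 1 - ω ^ (-(i : ℤ)) ≠ 0 := by
  intro h
  apply aux_zpow_ne_one hk hω hi
  have : ω ^ (-(i:ℤ)) = 1 := by linear_combination -h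
  rw [hω.zpow_eq_one_iff_dvd] at this ⊢
  exact (dvd_neg).mp this

/-- geometric sum: for `k ∤ m`, `∑_{i=1}^{k-1} ω^{im} = -1`. -/
lemma aux_geom_sum (hk : 2 ≤ k) (hω : IsPrimitiveRoot ω k) {m : ℤ}
    (hm : ¬ (k : ℤ) ∣ m) :
    ∑ i ∈ Finset.Icc 1 (k-1), ω ^ ((i : ℤ) * m) = -1 := by
  have hω0 : ω ≠ 0 := aux_ne_zero hk hω
  set x : ℂ := ω ^ m with hx
  have hx1 : x ≠ 1 := by
    intro h; rw [hx, hω.zpow_eq_one_iff_dvd] at h; exact hm h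
  have hxk : x ^ k = 1 := by
    rw [hx, ← zpow_natCast, ← zpow_mul, mul_comm, zpow_mul, zpow_natCast,
      hω.pow_eq_one, one_zpow]
  have hsum : ∑ i ∈ Finset.range k, x ^ i = 0 := by
    rw [geom_sum_eq hx1, hxk, sub_self, zero_div]
  have hterm : ∀ i : ℕ, ω ^ ((i : ℤ) * m) = x ^ i := by
    intro i
    rw [hx, ← zpow_natCast (ω ^ m), ← zpow_mul, mul_comm]
  have hins : Finset.range k = insert 0 (Finset.Icc 1 (k-1)) := by
    ext j
    simp only [Finset.mem_range, Finset.mem_insert, Finset.mem_Icc]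
    omega
  rw [hins, Finset.sum_insert (by simp)] at hsum
  calc ∑ i ∈ Finset.Icc 1 (k-1), ω ^ ((i : ℤ) * m)
      = ∑ i ∈ Finset.Icc 1 (k-1), x ^ i := by
        exact Finset.sum_congr rfl fun i _ => hterm i
    _ = -1 := by
        simp only [pow_zero] at hsum
        linear_combination hsum

/-- base case: `∑ 1/(1-ω^{-i}) = (k-1)/2`. -/
lemma aux_base (hk : 2 ≤ k) (hω : IsPrimitiveRoot ω k) :
    ∑ i ∈ Finset.Icc 1 (k-1), 1 / (1 - ω ^ (-(i : ℤ))) = ((k : ℂ) - 1) / 2 := by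
  have hω0 : ω ≠ 0 := aux_ne_zero hk hω
  set S := ∑ i ∈ Finset.Icc 1 (k-1), 1 / (1 - ω ^ (-(i : ℤ))) with hS
  have hrev : S = ∑ i ∈ Finset.Icc 1 (k-1), 1 / (1 - ω ^ ((i : ℤ))) := by
    rw [hS]
    refine Finset.sum_nbij' (fun i => k - i) (fun i => k - i) ?_ ?_ ?_ ?_ ?_
    · intro a ha; simp only [Finset.mem_Icc] at *; omega
    · intro a ha; simp only [Finset.mem_Icc] at *; omega
    · intro a ha; simp only [Finset.mem_Icc] at *; omega
    · intro a ha; simp only [Finset.mem_Icc] at *; omega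
    · intro a ha
      simp only [Finset.mem_Icc] at ha
      congr 2
      have hcast : ((k - a : ℕ) : ℤ) = (k : ℤ) - a := by omega
      rw [hcast]
      have : ω ^ ((k:ℤ) - (a:ℤ)) = ω ^ (-(a:ℤ)) := by
        rw [sub_eq_add_neg, zpow_add₀ hω0, zpow_natCast, hω.pow_eq_one, one_mul]
      rw [this]
  have h2S : S + S = (k : ℂ) - 1 := by
    nth_rewrite 2 [hrev]
    rw [hS, ← Finset.sum_add_distrib]
    have : ∀ i ∈ Finset.Icc 1 (k-1),
        1 / (1 - ω ^ (-(i : ℤ))) + 1 / (1 - ω ^ ((i : ℤ))) = 1 := by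
      intro i hi
      have hz := aux_zpow_ne_one hk hω hi
      rw [zpow_natCast] at hz
      have ha0 : ω ^ i ≠ 0 := pow_ne_zero _ hω0
      have ha1 : 1 - ω ^ i ≠ 0 := sub_ne_zero.mpr (Ne.symm hz)
      have h3 : (-1 + ω ^ i) ≠ 0 := fun h => ha1 (by linear_combination -h)
      rw [zpow_neg, zpow_natCast]
      have ht : (-1 + ω ^ i) * (-1 + ω ^ i)⁻¹ = 1 := mul_inv_cancel₀ h3
      field_simp [h3]
      linear_combination
    rw [Finset.sum_congr rfl this, Finset.sum_const, nsmul_eq_mul, mul_one,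
      Nat.card_Icc]
    have : (k - 1 + 1 - 1 : ℕ) = k - 1 := by omega
    rw [this]
    have : ((k - 1 : ℕ) : ℂ) = (k : ℂ) - 1 := by
      have : (1:ℕ) ≤ k := by omega
      push_cast [this]; ring
    rw [this]
  linear_combination h2S / 2

/-- step: `F(m+1) = F(m) - 1` when `k ∤ m+1`. -/
lemma aux_step (hk : 2 ≤ k) (hω : IsPrimitiveRoot ω k) {m : ℤ}
    (hm : ¬ (k : ℤ) ∣ (m + 1)) :
    ∑ i ∈ Finset.Icc 1 (k-1), ω ^ ((i : ℤ) * (m+1)) / (1 - ω ^ (-(i : ℤ)))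
      = (∑ i ∈ Finset.Icc 1 (k-1), ω ^ ((i : ℤ) * m) / (1 - ω ^ (-(i : ℤ)))) - 1 := by
  have hω0 : ω ≠ 0 := aux_ne_zero hk hω
  have hterm : ∀ i ∈ Finset.Icc 1 (k-1),
      ω ^ ((i : ℤ) * (m+1)) / (1 - ω ^ (-(i : ℤ)))
        = ω ^ ((i : ℤ) * m) / (1 - ω ^ (-(i : ℤ))) + ω ^ ((i : ℤ) * (m+1)) := by
    intro i hi
    have hz := aux_zpow_ne_one hk hω hi
    rw [zpow_natCast] at hz
    have ha0 : ω ^ i ≠ 0 := pow_ne_zero _ hω0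
    have ha1 : 1 - ω ^ i ≠ 0 := sub_ne_zero.mpr (Ne.symm hz)
    have h3 : (-1 + ω ^ i) ≠ 0 := fun h => ha1 (by linear_combination -h)
    have h1 : ω ^ ((i : ℤ) * (m+1)) = ω ^ ((i : ℤ) * m) * ω ^ i := by
      rw [mul_add, mul_one, zpow_add₀ hω0, zpow_natCast]
    rw [h1, zpow_neg, zpow_natCast]
    have ht : (-1 + ω ^ i) * (-1 + ω ^ i)⁻¹ = 1 := mul_inv_cancel₀ h3
    field_simp [h3]
    linear_combination
  rw [Finset.sum_congr rfl hterm, Finset.sum_add_distrib, aux_geom_sum hk hω hm]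
  ring

/-- core: for `0 ≤ r < k`, `F(r) = (k-1)/2 - r`. -/
lemma aux_core (hk : 2 ≤ k) (hω : IsPrimitiveRoot ω k) :
    ∀ r : ℕ, r < k →
    ∑ i ∈ Finset.Icc 1 (k-1), ω ^ ((i : ℤ) * r) / (1 - ω ^ (-(i : ℤ)))
      = ((k : ℂ) - 1) / 2 - r := by
  intro r
  induction r with
  | zero =>
    intro _
    simp only [Nat.cast_zero, mul_zero, zpow_zero]
    rw [aux_base hk hω]
    simp
  | succ n ih =>
    intro hn
    have hdvd : ¬ (k : ℤ) ∣ ((n : ℤ) + 1) := by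
      intro h
      have h' : (k : ℤ) ∣ ((n + 1 : ℕ) : ℤ) := by push_cast; exact h
      have := Int.natCast_dvd_natCast.mp h'
      have := Nat.le_of_dvd (by omega) this
      omega
    have hstep := aux_step hk hω (m := (n : ℤ)) hdvd
    push_cast
    push_cast at hstep
    rw [hstep, ih (by omega)]
    ring

end Aux

/-- Bryan's identity:
`(1/k) ∑_{i=1}^{k-1} ω^{is}/(1-ω^{-i}) = ⌊s/k⌋ - s/k + (k-1)/(2k)`. -/
theorem bryan_identity (k : ℕ) (hk : 2 ≤ k) (ω : ℂ)
    (hω : IsPrimitiveRoot ω k) (s : ℤ) :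
    (1 / (k : ℂ)) * ∑ i ∈ Finset.Icc 1 (k-1), ω ^ ((i : ℤ) * s) / (1 - ω ^ (-(i : ℤ)))
      = (((⌊(s : ℚ) / (k : ℚ)⌋ : ℚ) - (s : ℚ) / (k : ℚ) + ((k : ℚ) - 1) / (2 * k) : ℚ) : ℂ) := by
  have hω0 : ω ≠ 0 := aux_ne_zero hk hω
  have hk0 : (k : ℂ) ≠ 0 := by exact_mod_cast (by omega : k ≠ 0)
  have hkQ : (k : ℚ) ≠ 0 := by exact_mod_cast (by omega : k ≠ 0)
  set q : ℤ := s / (k : ℤ) with hq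
  set r : ℤ := s % (k : ℤ) with hr
  have hsplit : s = (k : ℤ) * q + r := (Int.mul_ediv_add_emod s k).symm
  have hr0 : 0 ≤ r := Int.emod_nonneg s (by exact_mod_cast (by omega : k ≠ 0))
  have hrk : r < (k : ℤ) := Int.emod_lt_of_pos s (by exact_mod_cast (by omega : 0 < k))
  -- reduce the sum exponents mod k
  have hsum : ∑ i ∈ Finset.Icc 1 (k-1), ω ^ ((i : ℤ) * s) / (1 - ω ^ (-(i : ℤ)))
      = ∑ i ∈ Finset.Icc 1 (k-1), ω ^ ((i : ℤ) * r) / (1 - ω ^ (-(i : ℤ))) := by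
    refine Finset.sum_congr rfl fun i _ => ?_
    congr 1
    rw [hsplit]
    have hone : ω ^ ((k:ℤ) * ((i:ℤ) * q)) = 1 := by
      rw [zpow_mul, zpow_natCast, hω.pow_eq_one, one_zpow]
    rw [show (i : ℤ) * ((k:ℤ) * q + r) = (i:ℤ) * r + (k : ℤ) * ((i:ℤ) * q) by ring,
      zpow_add₀ hω0, hone, mul_one]
  -- floor fact
  have hfloor : ⌊(s : ℚ) / (k : ℚ)⌋ = q := by
    rw [hq]; exact_mod_cast Rat.floor_intCast_div_natCast s k
  -- core value
  have hrnat : r.toNat < k := by omega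
  have hcore := aux_core hk hω r.toNat hrnat
  have hrcast : ((r.toNat : ℕ) : ℤ) = r := Int.toNat_of_nonneg hr0
  have hcore' : ∑ i ∈ Finset.Icc 1 (k-1), ω ^ ((i : ℤ) * r) / (1 - ω ^ (-(i : ℤ)))
      = ((k : ℂ) - 1) / 2 - (r : ℂ) := by
    rw [← hrcast]
    push_cast at hcore ⊢
    exact hcore
  rw [hsum, hcore', hfloor]
  -- now both sides are explicit rational expressions
  have hRHS : (((q : ℚ) - (s : ℚ) / (k : ℚ) + ((k : ℚ) - 1) / (2 * k) : ℚ) : ℂ)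
      = (q : ℂ) - (s : ℂ) / (k : ℂ) + ((k : ℂ) - 1) / (2 * k) := by
    push_cast
    ring
  rw [hRHS]
  have hsC : (s : ℂ) = (k : ℂ) * q + r := by
    rw [hsplit]; push_cast; ring
  rw [hsC]
  field_simp
  ring
end

section
/- Let $k \geq 2$, let $\omega$ be a primitive complex $k$-th root of unity, and let $s$ be an integer. Then $\sum_{i=1}^{k-1} \frac{\omega^{s i}}{(1-\omega^{-i})^2} = \sum_{l=0}^{k-1} (s - l)\left( -\left\{ \frac{s-l}{k} \right\} + \frac{k-1}{2k} \right)$, where $\{x\} = x - \lfloor x \rfloor$ denotes the fractional part. -/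
open Finset

lemma sumL1 (k : ℕ) : ∑ j ∈ range k, (j:ℤ) * 2 = (k:ℤ) * ((k:ℤ)-1) := by
  induction k with
  | zero => simp
  | succ n ih => rw [sum_range_succ, ih]; push_cast; ring

lemma sumL2 (k : ℕ) : ∑ j ∈ range k, (j:ℤ)^2 * 6 = (k:ℤ) * ((k:ℤ)-1) * (2*(k:ℤ)-1) := by
  induction k with
  | zero => simp
  | succ n ih => rw [sum_range_succ, ih]; push_cast; ring

lemma sumM (k n : ℕ) : ∑ r ∈ range n, ((k:ℤ) - 1 - 2*(r:ℤ)) = (n:ℤ) * ((k:ℤ) - (n:ℤ)) := by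
  induction n with
  | zero => simp
  | succ n ih => rw [sum_range_succ, ih]; push_cast; ring

lemma sumC (k : ℕ) : ∑ j ∈ range k, 6*(j:ℤ)*((k:ℤ)-(j:ℤ)) = (k:ℤ) * ((k:ℤ)^2-1) := by
  have h1 := sumL1 k
  have h2 := sumL2 k
  have h : ∑ j ∈ range k, 6*(j:ℤ)*((k:ℤ)-(j:ℤ))
      = ∑ j ∈ range k, (3*(k:ℤ)*((j:ℤ)*2) - ((j:ℤ)^2*6)) := by
    apply sum_congr rfl; intro j _; ring
  rw [h, sum_sub_distrib, ← mul_sum, h1, h2]; ring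

lemma key_int (k : ℕ) (hk : 0 < k) (s : ℤ) :
    ∑ l ∈ range k, 6*(s - (l:ℤ))*((k:ℤ) - 1 - 2*((s - (l:ℤ)) % (k:ℤ)))
      = 6*(k:ℤ)*((s % k)+1)*((k:ℤ) - (s % k) - 1) - (k:ℤ)*((k:ℤ)^2-1) := by
  have hk0 : (0:ℤ) < (k:ℤ) := by exact_mod_cast hk
  have hkne : (k:ℤ) ≠ 0 := hk0.ne'
  set b : ℤ := s % k with hb
  have hb0 : 0 ≤ b := Int.emod_nonneg s hkne
  have hbk : b < k := Int.emod_lt_of_pos s hk0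
  set q : ℤ := s / k with hq
  have hsq : (k:ℤ) * q + b = s := by exact Int.mul_ediv_add_emod s k
  -- reindex the sum via l ↦ ((s - l) % k).toNat
  have inv_aux : ∀ a : ℕ, a < k → ((s - (((s - (a:ℤ)) % (k:ℤ)).toNat : ℤ)) % (k:ℤ)).toNat = a := by
    intro a ha
    have h0 : 0 ≤ (s - (a:ℤ)) % k := Int.emod_nonneg _ hkne
    have h2 : (s - (((s - (a:ℤ)) % (k:ℤ)).toNat : ℤ)) % k = (a:ℤ) % k := by
      rw [Int.toNat_of_nonneg h0, Int.sub_emod, Int.emod_emod_of_dvd _ dvd_rfl,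
        ← Int.sub_emod, sub_sub_cancel]
    have h3 : (a:ℤ) % k = (a:ℤ) := Int.emod_eq_of_lt (by positivity) (by exact_mod_cast ha)
    omega
  have hbij : ∑ l ∈ range k, 6*(s - (l:ℤ))*((k:ℤ) - 1 - 2*((s - (l:ℤ)) % (k:ℤ)))
      = ∑ r ∈ range k, 6*(s - (s - (r:ℤ)) % (k:ℤ))*((k:ℤ) - 1 - 2*(r:ℤ)) := by
    refine sum_nbij' (fun l => ((s - (l:ℤ)) % (k:ℤ)).toNat)
      (fun r => ((s - (r:ℤ)) % (k:ℤ)).toNat) ?_ ?_ ?_ ?_ ?_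
    · intro a _
      simp only [mem_range]
      have h1 : (s - (a:ℤ)) % k < k := Int.emod_lt_of_pos _ hk0
      omega
    · intro a _
      simp only [mem_range]
      have h1 : (s - (a:ℤ)) % k < k := Int.emod_lt_of_pos _ hk0
      omega
    · intro a ha
      simp only [mem_range] at ha
      exact inv_aux a ha
    · intro a ha
      simp only [mem_range] at ha
      exact inv_aux a ha
    · intro a ha
      simp only [mem_range] at ha
      have h0 : 0 ≤ (s - (a:ℤ)) % k := Int.emod_nonneg _ hkne
      rw [Int.toNat_of_nonneg h0]
      have h2 : (s - (s - (a:ℤ)) % k) % k = (a:ℤ) % k := by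
        rw [Int.sub_emod s, Int.emod_emod_of_dvd _ dvd_rfl, ← Int.sub_emod, sub_sub_cancel]
      have h3 : (a:ℤ) % k = (a:ℤ) := Int.emod_eq_of_lt (by positivity) (by exact_mod_cast ha)
      rw [h2, h3]
  rw [hbij]
  -- evaluate (s - r) % k for r ∈ [0, k)
  have hmod : ∀ r : ℕ, r ∈ range k →
      (s - (r:ℤ)) % k = b - r + (if b < (r:ℤ) then (k:ℤ) else 0) := by
    intro r hr
    simp only [mem_range] at hr
    have hrk : (r:ℤ) < k := by exact_mod_cast hr
    have hr0 : (0:ℤ) ≤ r := by positivity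
    have h1 : (s - (r:ℤ)) % k = (b - r) % k := by
      conv_lhs => rw [Int.sub_emod]
      conv_rhs => rw [Int.sub_emod, Int.emod_eq_of_lt hb0 hbk]
    by_cases hc : b < (r:ℤ)
    · have e : (b - r + k) % k = (b - r) % k := by
        have h := Int.add_mul_emod_self_left (a := b - (r:ℤ)) (b := (k:ℤ)) (c := 1)
        simpa using h
      rw [h1, ← e, Int.emod_eq_of_lt (by omega) (by omega), if_pos hc]
    · rw [h1, Int.emod_eq_of_lt (by omega) (by omega), if_neg hc]
      ring
  have hterm : ∀ r ∈ range k,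
      6*(s - (s - (r:ℤ)) % (k:ℤ))*((k:ℤ) - 1 - 2*(r:ℤ))
        = (6*(k:ℤ)*q*((k:ℤ)-1-2*(r:ℤ)) + (3*((k:ℤ)-1))*((r:ℤ)*2) - 2*((r:ℤ)^2*6))
          - (if b < (r:ℤ) then 6*(k:ℤ)*((k:ℤ)-1-2*(r:ℤ)) else 0) := by
    intro r hr
    rw [hmod r hr]
    split_ifs with hc
    · linear_combination (-6*((k:ℤ)-1-2*(r:ℤ))) * hsq
    · linear_combination (-6*((k:ℤ)-1-2*(r:ℤ))) * hsq
  rw [sum_congr rfl hterm, sum_sub_distrib]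
  have hfirst : ∑ r ∈ range k,
      (6*(k:ℤ)*q*((k:ℤ)-1-2*(r:ℤ)) + (3*((k:ℤ)-1))*((r:ℤ)*2) - 2*((r:ℤ)^2*6))
      = 6*(k:ℤ)*q*((k:ℤ)*((k:ℤ)-(k:ℤ))) + (3*((k:ℤ)-1))*((k:ℤ)*((k:ℤ)-1))
          - 2*((k:ℤ)*((k:ℤ)-1)*(2*(k:ℤ)-1)) := by
    rw [sum_sub_distrib, sum_add_distrib, ← mul_sum, ← mul_sum, ← mul_sum,
      sumM k k, sumL1 k, sumL2 k]
  rw [hfirst]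
  -- second sum
  set bn : ℕ := b.toNat with hbn
  have hbcast : (bn:ℤ) = b := Int.toNat_of_nonneg hb0
  have hbnk : bn + 1 ≤ k := by omega
  have hsum2 : ∑ r ∈ range k, (if b < (r:ℤ) then 6*(k:ℤ)*((k:ℤ)-1-2*(r:ℤ)) else 0)
      = 6*(k:ℤ)*(∑ r ∈ Finset.Ico (bn+1) k, ((k:ℤ)-1-2*(r:ℤ))) := by
    rw [range_eq_Ico, ← Finset.sum_Ico_consecutive _ (Nat.zero_le (bn+1)) hbnk]
    have e1 : ∑ r ∈ Finset.Ico 0 (bn+1),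
        (if b < (r:ℤ) then 6*(k:ℤ)*((k:ℤ)-1-2*(r:ℤ)) else 0) = 0 := by
      apply Finset.sum_eq_zero
      intro r hr
      simp only [Finset.mem_Ico] at hr
      rw [if_neg]
      push_neg
      omega
    have e2 : ∑ r ∈ Finset.Ico (bn+1) k,
        (if b < (r:ℤ) then 6*(k:ℤ)*((k:ℤ)-1-2*(r:ℤ)) else 0)
        = ∑ r ∈ Finset.Ico (bn+1) k, 6*(k:ℤ)*((k:ℤ)-1-2*(r:ℤ)) := by
      apply Finset.sum_congr rfl
      intro r hr
      simp only [Finset.mem_Ico] at hr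
      rw [if_pos]
      omega
    rw [e1, e2, zero_add, ← mul_sum]
  rw [hsum2]
  have e3 : ∑ r ∈ Finset.Ico (bn+1) k, ((k:ℤ)-1-2*(r:ℤ))
      = (k:ℤ)*((k:ℤ)-(k:ℤ)) - ((bn:ℤ)+1)*((k:ℤ)-((bn:ℤ)+1)) := by
    rw [Finset.sum_Ico_eq_sub _ hbnk, sumM k k, sumM k (bn+1)]
    push_cast
    ring
  rw [e3, hbcast]
  ring

lemma T1 (k : ℕ) (x : ℂ) (hx : x ^ k = 1) (h1 : x ≠ 1) :
    (1 - x) * ∑ j ∈ range k, (j:ℂ) * x^j = -(k:ℂ) := by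
  have hg : ∑ j ∈ range k, x^j = 0 := by
    rw [geom_sum_eq h1, hx, sub_self, zero_div]
  have tele : ∑ j ∈ range k, (((j:ℂ)+1) * x^(j+1) - (j:ℂ) * x^j) = (k:ℂ) * x^k := by
    have h := Finset.sum_range_sub (fun j => (j:ℂ) * x^j) k
    push_cast at h
    simpa using h
  have e1 : (1-x) * ∑ j ∈ range k, (j:ℂ)*x^j
      = ∑ j ∈ range k, (x^(j+1) - (((j:ℂ)+1) * x^(j+1) - (j:ℂ) * x^j)) := by
    rw [Finset.mul_sum]
    apply sum_congr rfl
    intro j _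
    ring
  rw [e1, sum_sub_distrib, tele]
  have e2 : ∑ j ∈ range k, x^(j+1) = x * ∑ j ∈ range k, x^j := by
    rw [Finset.mul_sum]
    apply sum_congr rfl
    intro j _
    ring
  rw [e2, hg, hx]
  ring

lemma T2 (k : ℕ) (x : ℂ) (hx : x ^ k = 1) (h1 : x ≠ 1) :
    (1 - x) * ∑ j ∈ range k, (j:ℂ)^2 * x^j
      = 2*x*(∑ j ∈ range k, (j:ℂ) * x^j) - (k:ℂ)^2 := by
  have hg : ∑ j ∈ range k, x^j = 0 := by
    rw [geom_sum_eq h1, hx, sub_self, zero_div]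
  have tele : ∑ j ∈ range k, (((j:ℂ)+1)^2 * x^(j+1) - (j:ℂ)^2 * x^j) = (k:ℂ)^2 * x^k := by
    have h := Finset.sum_range_sub (fun j => (j:ℂ)^2 * x^j) k
    push_cast at h
    simpa using h
  have e1 : (1-x) * ∑ j ∈ range k, (j:ℂ)^2*x^j
      = ∑ j ∈ range k, ((2*x*((j:ℂ)*x^j) + x*x^j)
          - (((j:ℂ)+1)^2 * x^(j+1) - (j:ℂ)^2 * x^j)) := by
    rw [Finset.mul_sum]
    apply sum_congr rfl
    intro j _
    ring
  rw [e1, sum_sub_distrib, sum_add_distrib, ← Finset.mul_sum, ← Finset.mul_sum, tele, hg, hx]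
  ring

lemma polyP (k : ℕ) (x : ℂ) (hx : x ^ k = 1) (h1 : x ≠ 1) :
    (1 - x)^2 * ∑ j ∈ range k, ((j:ℂ)*((k:ℂ)-(j:ℂ))) * x^j = 2*(k:ℂ)*x := by
  have h1' := T1 k x hx h1
  have h2' := T2 k x hx h1
  have hP : ∑ j ∈ range k, ((j:ℂ)*((k:ℂ)-(j:ℂ))) * x^j
      = (k:ℂ) * (∑ j ∈ range k, (j:ℂ) * x^j) - ∑ j ∈ range k, (j:ℂ)^2 * x^j := by
    rw [Finset.mul_sum, ← sum_sub_distrib]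
    apply sum_congr rfl
    intro j _
    ring
  calc (1 - x)^2 * ∑ j ∈ range k, ((j:ℂ)*((k:ℂ)-(j:ℂ))) * x^j
      = (1-x) * ((k:ℂ) * ((1-x) * ∑ j ∈ range k, (j:ℂ) * x^j)
          - (1-x) * ∑ j ∈ range k, (j:ℂ)^2 * x^j) := by rw [hP]; ring
    _ = (1-x) * ((k:ℂ) * (-(k:ℂ))
          - (2*x*(∑ j ∈ range k, (j:ℂ) * x^j) - (k:ℂ)^2)) := by rw [h1', h2']
    _ = -2*x*((1-x) * ∑ j ∈ range k, (j:ℂ) * x^j) := by ring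
    _ = 2*(k:ℂ)*x := by rw [h1']; ring

lemma geomB (k : ℕ) (hk : 0 < k) (ω : ℂ) (hω : IsPrimitiveRoot ω k) (m : ℤ) :
    ∑ i ∈ range k, ω ^ (m * (i:ℤ)) = if (k:ℤ) ∣ m then (k:ℂ) else 0 := by
  have hω0 : ω ≠ 0 := hω.ne_zero hk.ne'
  have hterm : ∀ i ∈ range k, ω ^ (m * (i:ℤ)) = (ω ^ m) ^ i := by
    intro i _
    rw [zpow_mul, zpow_natCast]
  rw [sum_congr rfl hterm]
  by_cases hd : (k:ℤ) ∣ m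
  · rw [if_pos hd]
    have : ω ^ m = 1 := (hω.zpow_eq_one_iff_dvd m).mpr hd
    simp [this]
  · rw [if_neg hd]
    have hne : ω ^ m ≠ 1 := fun h => hd ((hω.zpow_eq_one_iff_dvd m).mp h)
    rw [geom_sum_eq hne]
    have hk1 : (ω ^ m) ^ k = 1 := by
      rw [← zpow_natCast, ← zpow_mul, mul_comm, zpow_mul, zpow_natCast, hω.pow_eq_one, one_zpow]
    rw [hk1, sub_self, zero_div]
/-- `∑_{i=1}^{k-1} ω^{si}/(1-ω^{-i})² = ∑_{l=0}^{k-1} (s-l)(-{(s-l)/k} + (k-1)/(2k))`. -/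
theorem sum_inv_square_fract_identity (k : ℕ) (hk : 2 ≤ k) (ω : ℂ)
    (hω : IsPrimitiveRoot ω k) (s : ℤ) :
    ∑ i ∈ Finset.Icc 1 (k-1), ω ^ (s * (i : ℤ)) / (1 - ω ^ (-(i : ℤ)))^2
      = ((∑ l ∈ Finset.range k, ((s : ℚ) - (l : ℚ)) *
          (-Int.fract (((s : ℚ) - (l : ℚ)) / (k : ℚ)) + ((k : ℚ) - 1) / (2 * k)) : ℚ) : ℂ) := by
  have hk0 : 0 < k := by omega
  have hkZ : (0:ℤ) < (k:ℤ) := by exact_mod_cast hk0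
  have hkQ : (k:ℚ) ≠ 0 := by exact_mod_cast hk0.ne'
  have hkC : (k:ℂ) ≠ 0 := by exact_mod_cast hk0.ne'
  have hω0 : ω ≠ 0 := hω.ne_zero hk0.ne'
  set b : ℤ := s % k with hb
  have hb0 : 0 ≤ b := Int.emod_nonneg s hkZ.ne'
  have hbk : b < k := Int.emod_lt_of_pos s hkZ
  -- RHS evaluation
  have hrhs : (∑ l ∈ Finset.range k, ((s : ℚ) - (l : ℚ)) *
          (-Int.fract (((s : ℚ) - (l : ℚ)) / (k : ℚ)) + ((k : ℚ) - 1) / (2 * k)) : ℚ)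
      = ((6*(k:ℤ)*(b+1)*((k:ℤ)-b-1) - (k:ℤ)*((k:ℤ)^2-1) : ℤ) : ℚ) / (12*(k:ℚ)) := by
    have hterm : ∀ l ∈ range k, ((s : ℚ) - (l : ℚ)) *
          (-Int.fract (((s : ℚ) - (l : ℚ)) / (k : ℚ)) + ((k : ℚ) - 1) / (2 * k))
        = ((6*(s - (l:ℤ))*((k:ℤ) - 1 - 2*((s - (l:ℤ)) % (k:ℤ))) : ℤ) : ℚ) / (12*(k:ℚ)) := by
      intro l _
      have hc : ((s : ℚ) - (l : ℚ)) = (((s - (l:ℤ)) : ℤ) : ℚ) := by push_cast; ring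
      rw [hc, Int.fract_div_intCast_eq_div_intCast_mod]
      have hm0 : (0:ℤ) ≤ (s - (l:ℤ)) % k := Int.emod_nonneg _ hkZ.ne'
      push_cast
      field_simp
      ring
    rw [sum_congr rfl hterm, ← sum_div, ← Int.cast_sum, key_int k hk0 s]
  rw [hrhs]
  -- LHS
  have hIcc : Finset.Icc 1 (k-1) = Finset.Ico 1 k := by
    rw [← Finset.Ico_add_one_right_eq_Icc]
    congr 1
    omega
  rw [hIcc]
  have h2k : (2*(k:ℂ)) ≠ 0 := by
    simp [hkC]
  -- per-term expansion
  have hAi : ∀ i ∈ Finset.Ico 1 k, ω ^ (s * (i : ℤ)) / (1 - ω ^ (-(i : ℤ)))^2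
      = (2*(k:ℂ))⁻¹ * ∑ j ∈ range k, ((j:ℂ)*((k:ℂ)-(j:ℂ))) * ω ^ ((s+1-(j:ℤ)) * (i:ℤ)) := by
    intro i hi
    simp only [Finset.mem_Ico] at hi
    have hxk : (ω ^ (-(i:ℤ))) ^ k = 1 := by
      rw [← zpow_natCast, ← zpow_mul, mul_comm, zpow_mul, zpow_natCast, hω.pow_eq_one, one_zpow]
    have hne1 : ω ^ (-(i:ℤ)) ≠ 1 := by
      intro h
      have hd : (k:ℤ) ∣ -(i:ℤ) := (hω.zpow_eq_one_iff_dvd _).mp h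
      rw [dvd_neg] at hd
      have : (k:ℤ) ≤ (i:ℤ) := Int.le_of_dvd (by exact_mod_cast hi.1) hd
      have : k ≤ i := by exact_mod_cast this
      omega
    have hP := polyP k (ω ^ (-(i:ℤ))) hxk hne1
    have hexp : ∑ j ∈ range k, ((j:ℂ)*((k:ℂ)-(j:ℂ))) * ω ^ ((s+1-(j:ℤ)) * (i:ℤ))
        = ω ^ ((s+1) * (i:ℤ)) * ∑ j ∈ range k, ((j:ℂ)*((k:ℂ)-(j:ℂ))) * (ω ^ (-(i:ℤ)))^j := by
      rw [Finset.mul_sum]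
      apply sum_congr rfl
      intro j _
      have hxj : (ω ^ (-(i:ℤ)))^j = ω ^ ((-(i:ℤ)) * (j:ℤ)) := by
        rw [← zpow_natCast (ω ^ (-(i:ℤ))) j, ← zpow_mul]
      have hzz : ω ^ ((s+1-(j:ℤ)) * (i:ℤ)) = ω ^ ((s+1)*(i:ℤ)) * ω^((-(i:ℤ))*(j:ℤ)) := by
        rw [← zpow_add₀ hω0]
        congr 1
        ring
      rw [hxj, hzz]
      ring
    have hne0 : (1 - ω ^ (-(i:ℤ)))^2 ≠ 0 := by
      apply pow_ne_zero
      intro h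
      apply hne1
      linear_combination -h
    rw [div_eq_iff hne0, hexp]
    symm
    have : ω ^ ((s+1) * (i:ℤ)) * (ω ^ (-(i:ℤ))) = ω ^ (s * (i:ℤ)) := by
      rw [← zpow_add₀ hω0]
      congr 1
      ring
    calc (2*(k:ℂ))⁻¹ * (ω ^ ((s+1) * (i:ℤ)) *
            ∑ j ∈ range k, ((j:ℂ)*((k:ℂ)-(j:ℂ))) * (ω ^ (-(i:ℤ)))^j) * (1 - ω ^ (-(i:ℤ)))^2
        = (2*(k:ℂ))⁻¹ * ω ^ ((s+1) * (i:ℤ)) *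
            ((1 - ω ^ (-(i:ℤ)))^2 * ∑ j ∈ range k, ((j:ℂ)*((k:ℂ)-(j:ℂ))) * (ω ^ (-(i:ℤ)))^j) := by
          ring
      _ = (2*(k:ℂ))⁻¹ * ω ^ ((s+1) * (i:ℤ)) * (2*(k:ℂ)* (ω ^ (-(i:ℤ)))) := by rw [hP]
      _ = ω ^ ((s+1) * (i:ℤ)) * (ω ^ (-(i:ℤ))) := by
          field_simp
      _ = ω ^ (s * (i:ℤ)) := this
  rw [sum_congr rfl hAi, ← Finset.mul_sum, Finset.sum_comm]
  -- inner geometric sums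
  have hgeo : ∀ m : ℤ, ∑ i ∈ Finset.Ico 1 k, ω ^ (m * (i:ℤ))
      = (if (k:ℤ) ∣ m then (k:ℂ) else 0) - 1 := by
    intro m
    have h0 := Finset.sum_eq_sum_Ico_succ_bot hk0 (fun i => ω ^ (m * (i:ℤ)))
    rw [← Finset.range_eq_Ico] at h0
    rw [← geomB k hk0 ω hω m, h0]
    simp
  have hswap : ∑ j ∈ range k, ∑ i ∈ Finset.Ico 1 k,
        ((j:ℂ)*((k:ℂ)-(j:ℂ))) * ω ^ ((s+1-(j:ℤ)) * (i:ℤ))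
      = ∑ j ∈ range k, ((j:ℂ)*((k:ℂ)-(j:ℂ))) *
          ((if (k:ℤ) ∣ (s+1-(j:ℤ)) then (k:ℂ) else 0) - 1) := by
    apply sum_congr rfl
    intro j _
    rw [← Finset.mul_sum, hgeo]
  rw [hswap]
  set j0 : ℕ := ((s+1) % k).toNat with hj0
  have hj0cast : ((j0:ℕ):ℤ) = (s+1) % k := Int.toNat_of_nonneg (Int.emod_nonneg _ hkZ.ne')
  have hj0k : j0 ∈ range k := by
    simp only [mem_range]
    have := Int.emod_lt_of_pos (s+1) hkZ
    omega
  have hcond : ∀ j ∈ range k, ((k:ℤ) ∣ (s+1-(j:ℤ))) ↔ j = j0 := by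
    intro j hj
    simp only [mem_range] at hj
    constructor
    · intro hd
      have h1 : (j:ℤ) % k = (s+1) % k := Int.modEq_iff_dvd.mpr hd
      have h2 : (j:ℤ) % k = (j:ℤ) :=
        Int.emod_eq_of_lt (by positivity) (by exact_mod_cast hj)
      omega
    · intro h
      subst h
      rw [hj0cast]
      exact ⟨(s+1)/k, by linarith [Int.mul_ediv_add_emod (s+1) (k:ℤ)]⟩
  have hite : ∑ j ∈ range k, ((j:ℂ)*((k:ℂ)-(j:ℂ))) * ((if (k:ℤ) ∣ (s+1-(j:ℤ)) then (k:ℂ) else 0) - 1)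
      = ∑ j ∈ range k, ((if j = j0 then ((j:ℂ)*((k:ℂ)-(j:ℂ))) * (k:ℂ) else 0)
          - ((j:ℂ)*((k:ℂ)-(j:ℂ)))) := by
    apply sum_congr rfl
    intro j hj
    rw [if_congr (hcond j hj) rfl rfl]
    split_ifs with h
    · subst h; ring
    · ring
  rw [hite, sum_sub_distrib,
    Finset.sum_ite_eq' (range k) j0 (fun j => ((j:ℂ)*((k:ℂ)-(j:ℂ))) * (k:ℂ)), if_pos hj0k]
  have hC : ∑ j ∈ range k, (j:ℂ)*((k:ℂ)-(j:ℂ)) = (k:ℂ)*((k:ℂ)^2-1)/6 := by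
    have h6 : ∑ j ∈ range k, (6:ℂ)*(j:ℂ)*((k:ℂ)-(j:ℂ)) = (k:ℂ)*((k:ℂ)^2-1) := by
      have h := sumC k
      have h' := congrArg (fun z : ℤ => (z : ℂ)) h
      push_cast at h'
      convert h' using 2
    rw [eq_div_iff (by norm_num : (6:ℂ) ≠ 0), ← h6, Finset.sum_mul]
    apply sum_congr rfl
    intro j _
    ring
  rw [hC]
  have hA : (k:ℤ)*((s+1)%k)*((k:ℤ)-((s+1)%k)) = (k:ℤ)*(b+1)*((k:ℤ)-b-1) := by
    have h1k : (1:ℤ) % k = 1 := Int.emod_eq_of_lt (by norm_num) (by exact_mod_cast hk)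
    have hadd : (s+1) % k = (b+1) % k := by
      rw [Int.add_emod, h1k]
    rcases eq_or_lt_of_le (by omega : b + 1 ≤ (k:ℤ)) with he | hl
    · have h0 : (b+1) % k = 0 := by rw [he]; simp
      have h2 : (k:ℤ) - b - 1 = 0 := by omega
      rw [hadd, h0, h2]
      ring
    · have h0 : (b+1)%k = b+1 := Int.emod_eq_of_lt (by omega) hl
      rw [hadd, h0]
      ring
  have hAC : (k:ℂ)*(j0:ℂ)*((k:ℂ)-(j0:ℂ)) = (k:ℂ)*((b:ℂ)+1)*((k:ℂ)-(b:ℂ)-1) := by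
    have hcj : ((j0:ℕ):ℂ) = (((s+1)%k : ℤ):ℂ) := by exact_mod_cast hj0cast
    rw [hcj]
    exact_mod_cast hA
  push_cast
  have hAC' : (j0:ℂ)*((k:ℂ)-(j0:ℂ))*(k:ℂ) = (k:ℂ)*((b:ℂ)+1)*((k:ℂ)-(b:ℂ)-1) := by
    linear_combination hAC
  rw [hAC']
  field_simp
  ring
end

section
/- Let $k \geq 2$, let $\omega$ be a primitive complex $k$-th root of unity, let $1 \leq i \leq k-1$, and let $x \in \mathbb{C}$ with $x^k \neq 1$. Then $\prod_{\substack{j=1 \\ j \neq i}}^{k-1} (x - \omega^j) = -\sum_{n=0}^{k-2} x^n \sum_{l=1}^{n+1} \omega^{-l i}$. -/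
/-- For a primitive `k`-th root of unity `ω`, `1 ≤ i ≤ k-1` and `x^k ≠ 1`,
`∏_{j≠i} (x - ω^j) = -∑_{n=0}^{k-2} x^n ∑_{l=1}^{n+1} ω^{-li}`. -/
theorem prod_erase_roots (k : ℕ) (hk : 2 ≤ k) (ω : ℂ) (hω : IsPrimitiveRoot ω k)
    (i : ℕ) (hi1 : 1 ≤ i) (hi2 : i ≤ k - 1) (x : ℂ) (hx : x ^ k ≠ 1) :
    ∏ j ∈ (Finset.Icc 1 (k-1)).erase i, (x - ω ^ j)
      = -∑ n ∈ Finset.range (k-1), x ^ n * ∑ l ∈ Finset.Icc 1 (n+1), ω ^ (-((l : ℤ) * i)) := by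
  have hk0 : 0 < k := by omega
  have hω0 : ω ≠ 0 := hω.ne_zero (by omega)
  have hωk : ω ^ k = 1 := hω.pow_eq_one
  have hωi1 : ω ^ i ≠ 1 := hω.pow_ne_one_of_pos_of_lt (by omega) (by omega)
  set r : ℂ := (ω ^ i)⁻¹ with hrdef
  have hωi0 : ω ^ i ≠ 0 := pow_ne_zero _ hω0
  have hr0 : r ≠ 0 := inv_ne_zero hωi0
  have hr1 : r ≠ 1 := by
    intro h
    apply hωi1
    rw [← inv_inv (ω ^ i), ← hrdef, h, inv_one]
  have hx1 : x ≠ 1 := by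
    intro h; apply hx; rw [h, one_pow]
  have hxi : x ≠ ω ^ i := by
    intro h
    apply hx
    rw [h, ← pow_mul, mul_comm, pow_mul, hωk, one_pow]
  have hrk : r ^ k = 1 := by
    rw [hrdef, inv_pow, ← pow_mul, mul_comm, pow_mul, hωk, one_pow, inv_one]
  -- rewrite the zpow
  have hzpow : ∀ l : ℕ, ω ^ (-((l : ℤ) * i)) = r ^ l := by
    intro l
    rw [hrdef, inv_pow, ← pow_mul, ← zpow_natCast ω (i * l), ← zpow_neg]
    congr 1
    push_cast
    ring
  -- product over all roots
  have hpoly := X_pow_sub_C_eq_prod hω hk0 (one_pow k)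
  have hprodall : x ^ k - 1 = ∏ j ∈ Finset.range k, (x - ω ^ j) := by
    have := congrArg (Polynomial.eval x) hpoly
    simpa [Polynomial.eval_prod] using this
  have hmemi : i ∈ Finset.Icc 1 (k - 1) := Finset.mem_Icc.mpr ⟨hi1, hi2⟩
  have hrange : Finset.range k = insert 0 (Finset.Icc 1 (k - 1)) := by
    ext m
    simp only [Finset.mem_range, Finset.mem_insert, Finset.mem_Icc]
    omega
  have hprod : x ^ k - 1
      = (x - 1) * ((x - ω ^ i) * ∏ j ∈ (Finset.Icc 1 (k-1)).erase i, (x - ω ^ j)) := by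
    rw [hprodall, hrange, Finset.prod_insert (by simp), pow_zero,
      ← Finset.mul_prod_erase _ _ hmemi]
  have hx1' : x - 1 ≠ 0 := sub_ne_zero.mpr hx1
  have hxi' : x - ω ^ i ≠ 0 := sub_ne_zero.mpr hxi
  apply mul_left_cancel₀ (mul_ne_zero hx1' hxi')
  have hL : (x - 1) * (x - ω ^ i) * ∏ j ∈ (Finset.Icc 1 (k-1)).erase i, (x - ω ^ j)
      = x ^ k - 1 := by rw [hprod]; ring
  rw [hL]
  -- rewrite inner sums without division
  have hinner : ∀ n : ℕ, ∑ l ∈ Finset.Icc 1 (n+1), ω ^ (-((l : ℤ) * i))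
      = r * ∑ l ∈ Finset.range (n+1), r ^ l := by
    intro n
    rw [Finset.sum_congr rfl fun l _ => hzpow l, ← Finset.Ico_add_one_right_eq_Icc,
      Finset.sum_Ico_eq_sum_range]
    rw [Finset.mul_sum]
    refine Finset.sum_congr (by norm_num) fun l _ => ?_
    rw [pow_add, pow_one]
  set T : ℂ := ∑ n ∈ Finset.range (k-1), x ^ n * ∑ l ∈ Finset.range (n+1), r ^ l with hTdef
  have hsum : ∑ n ∈ Finset.range (k-1), x ^ n * ∑ l ∈ Finset.Icc 1 (n+1), ω ^ (-((l : ℤ) * i))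
      = r * T := by
    rw [hTdef, Finset.mul_sum]
    exact Finset.sum_congr rfl fun n _ => by rw [hinner n]; ring
  set G1 : ℂ := ∑ n ∈ Finset.range (k-1), (x * r) ^ n with hG1def
  set G2 : ℂ := ∑ n ∈ Finset.range (k-1), x ^ n with hG2def
  have hT : T * (r - 1) = G1 * r - G2 := by
    rw [hTdef, Finset.sum_mul, hG1def, hG2def, Finset.sum_mul, ← Finset.sum_sub_distrib]
    refine Finset.sum_congr rfl fun n _ => ?_
    have := geom_sum_mul r (n + 1)
    calc x ^ n * (∑ l ∈ Finset.range (n+1), r ^ l) * (r - 1)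
        = x ^ n * ((∑ l ∈ Finset.range (n+1), r ^ l) * (r - 1)) := by ring
      _ = x ^ n * (r ^ (n + 1) - 1) := by rw [this]
      _ = (x * r) ^ n * r - x ^ n := by rw [mul_pow]; ring
  have hG1 : G1 * (x * r - 1) = x ^ (k-1) * r ^ (k-1) - 1 := by
    rw [hG1def, geom_sum_mul, mul_pow]
  have hG2 : G2 * (x - 1) = x ^ (k-1) - 1 := by
    rw [hG2def, geom_sum_mul]
  have hb : r ^ (k - 1) * r = 1 := by
    rw [← pow_succ, Nat.sub_add_cancel (by omega), hrk]
  have hxk : x ^ k = x ^ (k - 1) * x := by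
    rw [← pow_succ, Nat.sub_add_cancel (by omega)]
  have hir : (x - ω ^ i) * r = x * r - 1 := by
    rw [hrdef, sub_mul, mul_inv_cancel₀ hωi0]
  have hr1' : r - 1 ≠ 0 := sub_ne_zero.mpr hr1
  rw [hsum]
  apply mul_right_cancel₀ (mul_ne_zero hr1' hr0)
  symm
  calc (x - 1) * (x - ω ^ i) * -(r * T) * ((r - 1) * r)
      = (x - 1) * ((x - ω ^ i) * r) * -(r * (T * (r - 1))) := by ring
    _ = (x - 1) * (x * r - 1) * -(r * (G1 * r - G2)) := by rw [hir, hT]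
    _ = -((x - 1) * r ^ 2 * (G1 * (x * r - 1))) + (x * r - 1) * r * (G2 * (x - 1)) := by ring
    _ = -((x - 1) * r ^ 2 * (x ^ (k-1) * r ^ (k-1) - 1))
        + (x * r - 1) * r * (x ^ (k-1) - 1) := by rw [hG1, hG2]
    _ = (x ^ k - 1) * ((r - 1) * r) := by
        rw [hxk]
        linear_combination (-((x - 1) * r * x ^ (k-1))) * hb
end

section
/- Let $k \geq 2$ be even, write $\tilde{k} = k/2$, let $\omega$ be a primitive $k$-th root of unity, let $\eta \in \mathbb{C}$ satisfy $\eta^{\tilde{k}} = \omega$, and let $1 \leq i \leq \tilde{k} - 1$. Then $\frac{1}{k} \sum_{j=0}^{k-1} \frac{(-1)^j}{\eta^i \omega^j - 1} = \frac{\omega^i}{\omega^{2i} - 1}$. -/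
/-- For even `k`, `k̃ = k/2`, `η^{k̃} = ω` with `ω` a primitive `k`-th root of unity, and
`1 ≤ i ≤ k̃-1`: `(1/k) ∑_{j=0}^{k-1} (-1)^j/(η^i ω^j - 1) = ω^i/(ω^{2i}-1)`. -/
theorem sum_eta_identity_even_signed (k : ℕ) (hk : 2 ≤ k) (heven : Even k)
    (ω η : ℂ) (hω : IsPrimitiveRoot ω k) (hη : η ^ (k/2) = ω)
    (i : ℕ) (hi1 : 1 ≤ i) (hi2 : i ≤ k/2 - 1) :
    (1 / (k : ℂ)) * ∑ j ∈ Finset.range k, (-1 : ℂ) ^ j / (η ^ i * ω ^ j - 1)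
      = ω ^ i / (ω ^ (2*i) - 1) := by
  obtain ⟨t, ht⟩ := heven
  set m := k / 2 with hm
  have hk2 : k = 2 * m := by omega
  have hm2 : 2 ≤ m := by omega
  have hik : 2 * i < k := by omega
  have hωk : ω ^ k = 1 := hω.pow_eq_one
  have hωm : ω ^ m = -1 := by
    have h1 : ω ^ m ≠ 1 := hω.pow_ne_one_of_pos_of_lt (by omega) (by omega)
    have h3 : (ω ^ m) ^ 2 = 1 := by rw [← pow_mul, mul_comm, ← hk2, hωk]
    have h2 : (ω ^ m - 1) * (ω ^ m + 1) = 0 := by linear_combination h3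
    rcases mul_eq_zero.mp h2 with h | h
    · exact absurd (sub_eq_zero.mp h) h1
    · exact eq_neg_of_add_eq_zero_left h
  have h2i : ω ^ (2*i) ≠ 1 := hω.pow_ne_one_of_pos_of_lt (by omega) hik
  have hx : ∀ j : ℕ, (η ^ i * ω ^ j) ^ k = ω ^ (2*i) := by
    intro j
    have e1 : (η ^ i) ^ k = ω ^ (2*i) := by
      rw [← hη, ← pow_mul, ← pow_mul, hk2]
      ring_nf
    have e2 : (ω ^ j) ^ k = 1 := by rw [← pow_mul, mul_comm, pow_mul, hωk, one_pow]
    rw [mul_pow, e1, e2, mul_one]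
  have hne : ∀ j : ℕ, η ^ i * ω ^ j - 1 ≠ 0 := by
    intro j h
    apply h2i
    rw [← hx j, sub_eq_zero.mp h, one_pow]
  have hD : ω ^ (2*i) - 1 ≠ 0 := sub_ne_zero.mpr h2i
  have key : ∀ j ∈ Finset.range k, (-1 : ℂ) ^ j / (η ^ i * ω ^ j - 1)
      = ((-1 : ℂ) ^ j * ∑ n ∈ Finset.range k, (η ^ i * ω ^ j) ^ n) / (ω ^ (2*i) - 1) := by
    intro j _
    rw [div_eq_div_iff (hne j) hD, mul_assoc, geom_sum_mul, hx j]
  rw [Finset.sum_congr rfl key, ← Finset.sum_div]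
  have step : ∀ j ∈ Finset.range k, (-1 : ℂ) ^ j * ∑ n ∈ Finset.range k, (η ^ i * ω ^ j) ^ n
      = ∑ n ∈ Finset.range k, (η ^ i) ^ n * (ω ^ (m + n)) ^ j := by
    intro j _
    rw [Finset.mul_sum]
    refine Finset.sum_congr rfl fun n _ => ?_
    rw [← hωm]
    ring
  rw [Finset.sum_congr rfl step, Finset.sum_comm]
  have inner : ∀ n ∈ Finset.range k,
      ∑ j ∈ Finset.range k, (η ^ i) ^ n * (ω ^ (m + n)) ^ j
        = if n = m then (k : ℂ) * (η ^ i) ^ n else 0 := by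
    intro n hn
    have hnk : n < k := Finset.mem_range.mp hn
    rw [← Finset.mul_sum]
    by_cases h : n = m
    · subst h
      rw [if_pos rfl, show m + m = k by omega, hωk]
      simp [mul_comm]
    · rw [if_neg h]
      have hζ : ω ^ (m + n) ≠ 1 := by
        intro heq
        have hd : k ∣ m + n := (hω.pow_eq_one_iff_dvd (m + n)).mp heq
        have h1 : k ≤ m + n := Nat.le_of_dvd (by omega) hd
        have h2 : k ∣ (m + n - k) := Nat.dvd_sub hd dvd_rfl
        have h3 : m + n - k = 0 := Nat.eq_zero_of_dvd_of_lt h2 (by omega)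
        omega
      have hζk : (ω ^ (m + n)) ^ k = 1 := by
        rw [← pow_mul, mul_comm, pow_mul, hωk, one_pow]
      rw [geom_sum_eq hζ, hζk, sub_self, zero_div, mul_zero]
  rw [Finset.sum_congr rfl inner, Finset.sum_ite_eq' (Finset.range k) m
    (fun n => (k : ℂ) * (η ^ i) ^ n), if_pos (Finset.mem_range.mpr (by omega))]
  have hηm : (η ^ i) ^ m = ω ^ i := by rw [← pow_mul, mul_comm, pow_mul, hη]
  have hkne : (k : ℂ) ≠ 0 := Nat.cast_ne_zero.mpr (by omega)
  rw [hηm]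
  field_simp
end

section
/- Let $k \geq 2$ be even, write $\tilde{k} = k/2$, let $\omega$ be a primitive $k$-th root of unity, let $\eta$ satisfy $\eta^{\tilde{k}} = \omega$, and let $1 \leq i \leq \tilde{k}-1$. Then $\frac{1}{k} \sum_{j=0}^{k-1} \frac{1}{\eta^i \omega^j - 1} = \frac{1}{\omega^{2i} - 1}$. -/
/-- For even `k`, `k̃ = k/2`, `η^{k̃} = ω` with `ω` a primitive `k`-th root of unity, and
`1 ≤ i ≤ k̃-1`: `(1/k) ∑_{j=0}^{k-1} 1/(η^i ω^j - 1) = 1/(ω^{2i}-1)`. -/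
theorem sum_eta_identity_even (k : ℕ) (hk : 2 ≤ k) (heven : Even k)
    (ω η : ℂ) (hω : IsPrimitiveRoot ω k) (hη : η ^ (k/2) = ω)
    (i : ℕ) (hi1 : 1 ≤ i) (hi2 : i ≤ k/2 - 1) :
    (1 / (k : ℂ)) * ∑ j ∈ Finset.range k, 1 / (η ^ i * ω ^ j - 1)
      = 1 / (ω ^ (2*i) - 1) := by
  obtain ⟨m, hm⟩ := heven
  have hm2 : k / 2 = m := by omega
  rw [hm2] at hη hi2
  have hk0 : (k : ℂ) ≠ 0 := Nat.cast_ne_zero.mpr (by omega)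
  have hzk : (η ^ i) ^ k = ω ^ (2 * i) := by
    rw [← hη, ← pow_mul, ← pow_mul]
    congr 1
    subst hm; ring
  have h2ik : 2 * i < k := by omega
  have hne1 : ω ^ (2 * i) ≠ 1 :=
    hω.pow_ne_one_of_pos_of_lt (by omega) h2ik
  have hDne : ω ^ (2 * i) - 1 ≠ 0 := sub_ne_zero.mpr hne1
  have hwj : ∀ j : ℕ, (ω ^ j) ^ k = 1 := by
    intro j
    rw [← pow_mul, mul_comm, pow_mul, hω.pow_eq_one, one_pow]
  have hden : ∀ j : ℕ, η ^ i * ω ^ j - 1 ≠ 0 := by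
    intro j h
    apply hne1
    have h1 : η ^ i * ω ^ j = 1 := by linear_combination h
    have h2 : (η ^ i * ω ^ j) ^ k = 1 := by rw [h1, one_pow]
    rwa [mul_pow, hwj, mul_one, hzk] at h2
  have hterm : ∀ j : ℕ, (1 : ℂ) / (η ^ i * ω ^ j - 1)
      = (∑ m ∈ Finset.range k, (η ^ i * ω ^ j) ^ m) / (ω ^ (2 * i) - 1) := by
    intro j
    rw [div_eq_div_iff (hden j) hDne, geom_sum_mul, one_mul,
      mul_pow, hwj, mul_one, hzk]
  have hgeo : ∀ n : ℕ, 0 < n → n < k → ∑ j ∈ Finset.range k, (ω ^ n) ^ j = 0 := by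
    intro n hn1 hn2
    have h := geom_sum_mul (ω ^ n) k
    have hne : ω ^ n - 1 ≠ 0 := sub_ne_zero.mpr (hω.pow_ne_one_of_pos_of_lt hn1.ne' hn2)
    have hpk : (ω ^ n) ^ k = 1 := by
      rw [← pow_mul, mul_comm, pow_mul, hω.pow_eq_one, one_pow]
    rw [hpk, sub_self] at h
    exact (mul_eq_zero.mp h).resolve_right hne
  have hsum : ∑ j ∈ Finset.range k, ∑ n ∈ Finset.range k, (η ^ i * ω ^ j) ^ n
      = (k : ℂ) := by
    rw [Finset.sum_comm]
    have hcong : ∀ n ∈ Finset.range k, ∑ j ∈ Finset.range k, (η ^ i * ω ^ j) ^ n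
        = (η ^ i) ^ n * ∑ j ∈ Finset.range k, (ω ^ n) ^ j := by
      intro n _
      rw [Finset.mul_sum]
      refine Finset.sum_congr rfl fun j _ => ?_
      rw [mul_pow]; ring
    rw [Finset.sum_congr rfl hcong, Finset.sum_eq_single 0]
    · simp
    · intro n hn hn0
      rw [hgeo n (Nat.pos_of_ne_zero hn0) (Finset.mem_range.mp hn), mul_zero]
    · intro h; exact absurd (Finset.mem_range.mpr (by omega)) h
  calc (1 / (k : ℂ)) * ∑ j ∈ Finset.range k, 1 / (η ^ i * ω ^ j - 1)
      = (1 / (k : ℂ)) * ∑ j ∈ Finset.range k,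
          (∑ n ∈ Finset.range k, (η ^ i * ω ^ j) ^ n) / (ω ^ (2 * i) - 1) := by
        rw [Finset.sum_congr rfl fun j _ => hterm j]
    _ = (1 / (k : ℂ)) * ((∑ j ∈ Finset.range k, ∑ n ∈ Finset.range k,
          (η ^ i * ω ^ j) ^ n) / (ω ^ (2 * i) - 1)) := by rw [← Finset.sum_div]
    _ = (1 / (k : ℂ)) * ((k : ℂ) / (ω ^ (2 * i) - 1)) := by rw [hsum]
    _ = 1 / (ω ^ (2 * i) - 1) := by field_simp
end

section
/- Let $r \geq 1$, $k \geq 2$, let $C$ be the Cartan matrix of type $A_{k-1}$, and for each $\alpha = 1, \dots, r$ let $v_\alpha \in \frac{1}{k}\mathbb{Z}^{k-1}$ be a vector such that $k (v_\alpha)_l \equiv -l c_\alpha \pmod{k}$ for all $l = 1, \dots, k-1$, for some $c_\alpha \in \{0, 1, \dots, k-1\}$. Let $n_1, \dots, n_r$ be nonnegative integers. Then the quantity $\Delta = \sum_{\alpha=1}^r n_\alpha + \frac{1}{2} \sum_{\alpha=1}^r v_\alpha \cdot C v_\alpha - \frac{1}{2r} \sum_{\alpha, \beta = 1}^r v_\alpha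 \cdot C v_\beta$ lies in $\frac{1}{2 r k} \mathbb{Z}$. -/
-- row sum of the A_{k-1} Cartan matrix against the vector (1,2,...,n)
lemma rowsum_aux (n i : ℕ) (hi : i < n) :
    ∑ b ∈ Finset.range n,
      ((if i = b then (2:ℤ) else if i = b+1 ∨ b = i+1 then -1 else 0) * ((b:ℤ)+1))
    = if i+1 = n then (n:ℤ)+1 else 0 := by
  have hfun : ∀ b : ℕ, (if i = b then (2:ℤ) else if i = b+1 ∨ b = i+1 then -1 else 0) * ((b:ℤ)+1)
      = (if b = i then 2*((i:ℤ)+1) else 0)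
        + (if b = i+1 then -(((i:ℤ))+2) else 0)
        + (if 1 ≤ i ∧ b = i-1 then -((i:ℤ)) else 0) := by
    intro b
    split_ifs <;> omega
  rw [Finset.sum_congr rfl (fun b _ => hfun b)]
  rw [Finset.sum_add_distrib, Finset.sum_add_distrib]
  rw [Finset.sum_ite_eq' (Finset.range n) i, Finset.sum_ite_eq' (Finset.range n) (i+1)]
  have h3 : (∑ b ∈ Finset.range n, if 1 ≤ i ∧ b = i-1 then -((i:ℤ)) else 0) = -(i:ℤ) := by
    rcases Nat.eq_zero_or_pos i with h | h
    · simp [h]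
    · have he : ∀ b, (if 1 ≤ i ∧ b = i-1 then -((i:ℤ)) else 0) = (if b = i-1 then -((i:ℤ)) else 0) := by
        intro b; split_ifs <;> omega
      rw [Finset.sum_congr rfl (fun b _ => he b), Finset.sum_ite_eq' (Finset.range n) (i-1)]
      have hm : i - 1 ∈ Finset.range n := by simp; omega
      simp [hm]
  rw [h3]
  simp only [Finset.mem_range]
  split_ifs <;> omega

lemma bilin_dvd (k : ℕ) (hk : 2 ≤ k) (w w' : Fin (k-1) → ℤ) (c c' : ℤ)
    (hw : ∀ l : Fin (k-1), (k:ℤ) ∣ w l + (((l:ℕ):ℤ)+1)*c)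
    (hw' : ∀ l : Fin (k-1), (k:ℤ) ∣ w' l + (((l:ℕ):ℤ)+1)*c') :
    (k:ℤ) ∣ ∑ i : Fin (k-1), ∑ j : Fin (k-1),
      w i * (if i = j then (2:ℤ) else if i.val = j.val+1 ∨ j.val = i.val+1 then -1 else 0) * w' j := by
  have hn : (k-1) + 1 = k := by omega
  -- row sums are divisible by k
  have hrow : ∀ i : Fin (k-1),
      (∑ j : Fin (k-1), (if i = j then (2:ℤ) else if i.val = j.val+1 ∨ j.val = i.val+1 then -1 else 0) * ((j.val:ℤ)+1))
      = if i.val + 1 = k-1 then (k:ℤ) else 0 := by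
    intro i
    have := rowsum_aux (k-1) i.val i.isLt
    simp only [Fin.ext_iff]
    rw [Fin.sum_univ_eq_sum_range
      (fun jv => (if i.val = jv then (2:ℤ) else if i.val = jv+1 ∨ jv = i.val+1 then -1 else 0) * ((jv:ℤ)+1))]
    rw [this]
    have : ((k-1 : ℕ):ℤ) + 1 = (k:ℤ) := by omega
    rw [this]
  set a : Fin (k-1) → Fin (k-1) → ℤ :=
    fun i j => (if i = j then (2:ℤ) else if i.val = j.val+1 ∨ j.val = i.val+1 then -1 else 0) with ha
  rw [← ZMod.intCast_zmod_eq_zero_iff_dvd]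
  rw [Int.cast_sum]
  have hweq : ∀ l : Fin (k-1), ((w l : ℤ) : ZMod k) = -(((l:ℕ) : ZMod k)+1) * ((c:ℤ) : ZMod k) := by
    intro l
    have := (ZMod.intCast_zmod_eq_zero_iff_dvd _ k).2 (hw l)
    push_cast at this
    linear_combination this
  have hweq' : ∀ l : Fin (k-1), ((w' l : ℤ) : ZMod k) = -(((l:ℕ) : ZMod k)+1) * ((c':ℤ) : ZMod k) := by
    intro l
    have := (ZMod.intCast_zmod_eq_zero_iff_dvd _ k).2 (hw' l)
    push_cast at this
    linear_combination this
  refine Finset.sum_eq_zero fun i _ => ?_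
  rw [Int.cast_sum]
  have hrowz : (∑ j : Fin (k-1), ((a i j : ℤ) : ZMod k) * (((j:ℕ) : ZMod k)+1)) = 0 := by
    have h1 : ((∑ j : Fin (k-1), a i j * ((j.val:ℤ)+1) : ℤ) : ZMod k) = 0 := by
      rw [hrow i]
      split_ifs <;> simp
    rw [Int.cast_sum] at h1
    calc (∑ j : Fin (k-1), ((a i j : ℤ) : ZMod k) * (((j:ℕ) : ZMod k)+1))
        = ∑ j : Fin (k-1), ((a i j * ((j.val:ℤ)+1) : ℤ) : ZMod k) := by
          refine Finset.sum_congr rfl fun j _ => ?_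
          rw [Int.cast_mul, Int.cast_add, Int.cast_one, Int.cast_natCast]
      _ = 0 := h1
  calc (∑ j : Fin (k-1), ((w i * a i j * w' j : ℤ) : ZMod k))
      = ∑ j : Fin (k-1), ((((i:ℕ) : ZMod k)+1) * ((c:ℤ) : ZMod k) * ((c':ℤ) : ZMod k)) * (((a i j : ℤ) : ZMod k) * (((j:ℕ) : ZMod k)+1)) := by
        refine Finset.sum_congr rfl fun j _ => ?_
        rw [Int.cast_mul, Int.cast_mul, hweq i, hweq' j]
        ring
    _ = ((((i:ℕ) : ZMod k)+1) * ((c:ℤ) : ZMod k) * ((c':ℤ) : ZMod k)) * (∑ j : Fin (k-1), ((a i j : ℤ) : ZMod k) * (((j:ℕ) : ZMod k)+1)) := by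
        rw [Finset.mul_sum]
    _ = 0 := by rw [hrowz, mul_zero]

/-- The discriminant `Δ = ∑ n_α + ½ ∑ v_α·Cv_α - (1/2r) ∑_{α,β} v_α·Cv_β`
lies in `(1/2rk)ℤ`. -/
theorem discriminant_in_lattice (r k : ℕ) (hr : 1 ≤ r) (hk : 2 ≤ k)
    (C : Matrix (Fin (k-1)) (Fin (k-1)) ℚ)
    (hC : ∀ i j, C i j =
      if i = j then 2 else if i.val = j.val + 1 ∨ j.val = i.val + 1 then -1 else 0)
    (v : Fin r → Fin (k-1) → ℚ) (c : Fin r → ℕ) (hck : ∀ α, c α < k)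
    (hv : ∀ α l, ∃ m : ℤ, (k : ℚ) * v α l = (m : ℚ) ∧
        (k : ℤ) ∣ m + ((l.val : ℤ) + 1) * c α)
    (n : Fin r → ℕ) :
    ∃ m : ℤ,
      (∑ α, (n α : ℚ))
        + (1/2) * ∑ α, dotProduct (v α) (C.mulVec (v α))
        - (1/(2*(r : ℚ))) * ∑ α, ∑ β, dotProduct (v α) (C.mulVec (v β))
      = (m : ℚ) / (2 * r * k) := by
  choose w hw1 hw2 using hv
  have hk0 : (k:ℚ) ≠ 0 := by
    have : 0 < k := by omega
    exact_mod_cast this.ne'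
  have hr0 : (r:ℚ) ≠ 0 := by
    have : 0 < r := hr
    exact_mod_cast this.ne'
  have hveq : ∀ α l, v α l = (w α l : ℚ) / k := by
    intro α l
    field_simp
    linarith [hw1 α l]
  -- integer bilinear sums
  have hdvd : ∀ α β : Fin r, (k:ℤ) ∣ ∑ i : Fin (k-1), ∑ j : Fin (k-1),
      w α i * (if i = j then (2:ℤ) else if i.val = j.val+1 ∨ j.val = i.val+1 then -1 else 0) * w β j := by
    intro α β
    exact bilin_dvd k hk (w α) (w β) (c α) (c β) (hw2 α) (hw2 β)
  choose t ht using hdvd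
  -- dot products in terms of t
  have hd : ∀ α β : Fin r, dotProduct (v α) (C.mulVec (v β)) = (t α β : ℚ) / k := by
    intro α β
    have expand : dotProduct (v α) (C.mulVec (v β))
        = ∑ i : Fin (k-1), ∑ j : Fin (k-1),
            ((w α i : ℚ)/k) * ((((if i = j then (2:ℤ) else if i.val = j.val+1 ∨ j.val = i.val+1 then -1 else 0) : ℤ) : ℚ)) * ((w β j : ℚ)/k) := by
      rw [dotProduct]
      refine Finset.sum_congr rfl fun i _ => ?_
      rw [Matrix.mulVec, dotProduct, Finset.mul_sum]
      refine Finset.sum_congr rfl fun j _ => ?_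
      rw [hveq α i, hveq β j, hC i j]
      split_ifs <;> push_cast <;> ring
    rw [expand]
    have cast_ht : ((∑ i : Fin (k-1), ∑ j : Fin (k-1),
        w α i * (if i = j then (2:ℤ) else if i.val = j.val+1 ∨ j.val = i.val+1 then -1 else 0) * w β j : ℤ) : ℚ)
        = (k:ℚ) * (t α β : ℚ) := by exact_mod_cast congrArg (fun z : ℤ => (z:ℚ)) (ht α β)
    have step : (∑ i : Fin (k-1), ∑ j : Fin (k-1),
        ((w α i : ℚ)/k) * ((((if i = j then (2:ℤ) else if i.val = j.val+1 ∨ j.val = i.val+1 then -1 else 0) : ℤ) : ℚ)) * ((w β j : ℚ)/k))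
        = ((∑ i : Fin (k-1), ∑ j : Fin (k-1),
        w α i * (if i = j then (2:ℤ) else if i.val = j.val+1 ∨ j.val = i.val+1 then -1 else 0) * w β j : ℤ) : ℚ) / ((k:ℚ)*(k:ℚ)) := by
      rw [Int.cast_sum, Finset.sum_div]
      refine Finset.sum_congr rfl fun i _ => ?_
      rw [Int.cast_sum, Finset.sum_div]
      refine Finset.sum_congr rfl fun j _ => ?_
      rw [Int.cast_mul, Int.cast_mul]
      field_simp
    rw [step, cast_ht]
    field_simp
  -- final computation
  refine ⟨2*r*k*(∑ α, (n α : ℤ)) + (r:ℤ) * (∑ α, t α α) - (∑ α, ∑ β, t α β), ?_⟩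
  have e1 : ∑ α, dotProduct (v α) (C.mulVec (v α)) = (∑ α, (t α α : ℚ)) / k := by
    rw [Finset.sum_div]
    exact Finset.sum_congr rfl fun α _ => hd α α
  have e2 : ∑ α, ∑ β, dotProduct (v α) (C.mulVec (v β)) = (∑ α, ∑ β, (t α β : ℚ)) / k := by
    rw [Finset.sum_div]
    refine Finset.sum_congr rfl fun α _ => ?_
    rw [Finset.sum_div]
    exact Finset.sum_congr rfl fun β _ => hd α β
  rw [e1, e2]
  push_cast
  field_simp
end
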